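/- (Invariance principle, part I) If two permutations π and π' of {1,…,n} are torically equivalent, then their block transposition distances are equal: d(π) = d(π'). -/

import Mathlib

/-- `π` is the block transposition `σ(i,j,k)` on `{1,…,n}` (positions/values written
1-based; the underlying type is `Fin n`, so position `t : Fin n` stands for `t+1`). -/
def IsBlockTranspositionOf (n i j k : ℕ) (π : Equiv.Perm (Fin n)) : Prop :=
  i < j ∧ j < k ∧ k ≤ n ∧
  ∀ t : Fin n,
    (π t : ℕ) + 1 =
      if t.val + 1 ≤ i ∨ k < t.val + 1 then t.val + 1
      else if t.val + 1 ≤ k - j + i then t.val + 1 + (j - i)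
      else t.val + 1 - (k - j)

/-- `π` is a block transposition of `Sym_n`. -/
def IsBlockTransposition (n : ℕ) (π : Equiv.Perm (Fin n)) : Prop :=
  ∃ i j k : ℕ, IsBlockTranspositionOf n i j k π

/-- the block transposition distance `d(π,ν)`: the least `m` such that
`ν = π ∘ σ₁ ∘ ⋯ ∘ σ_m` with each `σ_i` a block transposition. -/
noncomputable def btDist (n : ℕ) (π ν : Equiv.Perm (Fin n)) : ℕ :=
  sInf {m | ∃ l : List (Equiv.Perm (Fin n)),
    l.length = m ∧ (∀ σ ∈ l, IsBlockTransposition n σ) ∧ ν = π * l.prod}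

/-- `[0 π]` : the permutation of `{0,…,n}` fixing `0` and agreeing with `π` on `{1,…,n}`. -/
def zeroExtend {n : ℕ} (π : Equiv.Perm (Fin n)) : Equiv.Perm (Fin (n + 1)) :=
  Equiv.Perm.decomposeFin.symm (0, π)

/-- the value of the sequence `0 π₁ ⋯ π_n` (positions taken mod `n+1`, `π₀ := 0`). -/
def seqVal (n : ℕ) (π : Equiv.Perm (Fin n)) (x : ℕ) : ℕ :=
  if h : x % (n + 1) = 0 then 0
  else (π ⟨x % (n + 1) - 1, by
    have h2 : x % (n + 1) < n + 1 := Nat.mod_lt _ (Nat.succ_pos n)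
    omega⟩ : Fin n).val + 1

/-- `π` and `π'` are torically equivalent: `π'_x ≡ π_{x+r} − π_r (mod n+1)`. -/
def ToricEquiv (n : ℕ) (π π' : Equiv.Perm (Fin n)) : Prop :=
  ∃ r ≤ n, ∀ x : ℕ, 1 ≤ x → x ≤ n →
    seqVal n π' x ≡ seqVal n π (x + r) + (n + 1) - seqVal n π r [MOD n + 1]

/-- `ϖ` is the image of `π` under the toric map `Ω_r`. -/
def IsToricImage (n r : ℕ) (π ϖ : Equiv.Perm (Fin n)) : Prop :=
  ∀ x : ℕ, 1 ≤ x → x ≤ n →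
    seqVal n ϖ x ≡ seqVal n π (x + r) + (n + 1) - seqVal n π r [MOD n + 1]

/-- the value at place `x` of the sequence `0 π₁ ⋯ π_n (n+1)`. -/
def extSeq (n : ℕ) (π : Equiv.Perm (Fin n)) (x : ℕ) : ℕ :=
  if hx : 1 ≤ x ∧ x ≤ n then (π ⟨x - 1, by omega⟩ : Fin n).val + 1
  else if x = 0 then 0 else n + 1

/-- the number of bonds of `π`, i.e. of adjacent pairs `x, x+1` in the sequence
`0 π₁ ⋯ π_n (n+1)`. -/
def bondCount (n : ℕ) (π : Equiv.Perm (Fin n)) : ℕ :=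
  ((Finset.range (n + 1)).filter fun t => extSeq n π (t + 1) = extSeq n π t + 1).card

/-- `σ` is a block transposition `σ̄(i,j,k)`, `−1 ≤ i < j < k ≤ n`, of `{0,1,…,n}`. -/
def IsBlockTransposition0 (n : ℕ) (σ : Equiv.Perm (Fin (n + 1))) : Prop :=
  ∃ i j k : ℤ, -1 ≤ i ∧ i < j ∧ j < k ∧ k ≤ (n : ℤ) ∧
    ∀ t : Fin (n + 1),
      ((σ t : ℕ) : ℤ) =
        if ((t : ℕ) : ℤ) ≤ i ∨ k < ((t : ℕ) : ℤ) then ((t : ℕ) : ℤ)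
        else if ((t : ℕ) : ℤ) ≤ k - j + i then ((t : ℕ) : ℤ) + (j - i)
        else ((t : ℕ) : ℤ) - (k - j)

/-- the number of bonds of a permutation `π̄` of `{0,…,n}`: indices `t`, `0 ≤ t < n`,
with `π̄_{t+1} ≡ π̄_t + 1 (mod n+1)`. -/
def bondCount0 (n : ℕ) (π : Equiv.Perm (Fin (n + 1))) : ℕ :=
  (Finset.univ.filter fun t : Fin n =>
    (π t.succ : Fin (n + 1)).val = ((π t.castSucc : Fin (n + 1)).val + 1) % (n + 1)).card



lemma fin_mod_eq (N X D : ℕ) (hD : D < N) (h : X = D ∨ X = D + N) : X % N = D := by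
  rcases h with h | h
  · rw [h, Nat.mod_eq_of_lt hD]
  · rw [h, Nat.add_mod_right, Nat.mod_eq_of_lt hD]

set_option maxHeartbeats 2000000 in
lemma core (n i j k B u i' j' k' : ℕ)
    (hij : i < j) (hjk : j < k) (hkn : k ≤ n) (hB : B ≤ n) (hu1 : 1 ≤ u) (hun : u ≤ n)
    (hc : (B ≤ i ∧ i' = i - B ∧ j' = j - B ∧ k' = k - B) ∨
          (i < B ∧ B ≤ k - j + i ∧ i' = k - j + i - B ∧ j' = n + 1 + 2 * i - (j + B) ∧
            k' = n + 1 + i - B) ∨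
          (k - j + i < B ∧ B ≤ k ∧ i' = k - B ∧ j' = 2 * k - (j + B) ∧
            k' = n + 1 + i + k - (j + B)) ∨
          (k < B ∧ i' = n + 1 + i - B ∧ j' = n + 1 + j - B ∧ k' = n + 1 + k - B)) :
    (n + 1 - (if B ≤ i ∨ k < B then B else if B ≤ k - j + i then B + (j - i) else B - (k - j))
      + (if (u + B) % (n + 1) ≤ i ∨ k < (u + B) % (n + 1) then (u + B) % (n + 1)
          else if (u + B) % (n + 1) ≤ k - j + i then (u + B) % (n + 1) + (j - i)
          else (u + B) % (n + 1) - (k - j))) % (n + 1)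
    = if u ≤ i' ∨ k' < u then u
      else if u ≤ k' - j' + i' then u + (j' - i') else u - (k' - j') := by
  have hm : (u + B) % (n + 1) = u + B ∧ u + B < n + 1 ∨
      (u + B) % (n + 1) = u + B - (n + 1) ∧ n + 1 ≤ u + B := by
    rcases Nat.lt_or_ge (u + B) (n + 1) with h | h
    · exact Or.inl ⟨Nat.mod_eq_of_lt h, h⟩
    · exact Or.inr ⟨by rw [Nat.mod_eq_sub_mod h, Nat.mod_eq_of_lt (by omega)], h⟩
  rcases hm with ⟨hm, hm2⟩ | ⟨hm, hm2⟩ <;> rw [hm] <;>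
    rcases hc with ⟨h1, e1, e2, e3⟩ | ⟨h1, h2, e1, e2, e3⟩ | ⟨h1, h2, e1, e2, e3⟩ | ⟨h1, e1, e2, e3⟩ <;>
    split_ifs <;> (apply fin_mod_eq <;> omega)

lemma zE_zero {n : ℕ} (π : Equiv.Perm (Fin n)) : zeroExtend π 0 = 0 := by
  simp [zeroExtend]

lemma zE_succ {n : ℕ} (π : Equiv.Perm (Fin n)) (t : Fin n) :
    zeroExtend π t.succ = (π t).succ := by
  simp [zeroExtend]

lemma zE_mul {n : ℕ} (π ρ : Equiv.Perm (Fin n)) :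
    zeroExtend (π * ρ) = zeroExtend π * zeroExtend ρ := by
  ext x
  induction x using Fin.cases with
  | zero => simp [zE_zero]
  | succ t => simp [zE_succ, Equiv.Perm.mul_apply]

lemma zE_one {n : ℕ} : zeroExtend (1 : Equiv.Perm (Fin n)) = 1 := by
  ext x
  induction x using Fin.cases with
  | zero => simp [zE_zero]
  | succ t => simp [zE_succ]

lemma zE_inj {n : ℕ} {π ρ : Equiv.Perm (Fin n)} (h : zeroExtend π = zeroExtend ρ) : π = ρ := by
  have := Equiv.Perm.decomposeFin.symm.injective h
  exact (Prod.mk.injEq _ _ _ _ ▸ congrArg id this).2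

lemma valF {n i j k : ℕ} {σ : Equiv.Perm (Fin n)} (h : IsBlockTranspositionOf n i j k σ)
    (y : Fin (n + 1)) :
    (zeroExtend σ y : Fin (n + 1)).val =
      if y.val ≤ i ∨ k < y.val then y.val
      else if y.val ≤ k - j + i then y.val + (j - i)
      else y.val - (k - j) := by
  induction y using Fin.cases with
  | zero => simp [zE_zero]
  | succ t =>
      have := h.2.2.2 t
      rw [zE_succ]
      simpa [Fin.val_succ] using this

lemma key {n : ℕ} (σ : Equiv.Perm (Fin n)) (hσ : IsBlockTransposition n σ) (b : Fin (n + 1)) :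
    ∃ τ : Equiv.Perm (Fin n), IsBlockTransposition n τ ∧
      ∀ x : Fin (n + 1), zeroExtend τ x = zeroExtend σ (x + b) - zeroExtend σ b := by
  obtain ⟨i, j, k, h⟩ := hσ
  obtain ⟨hij, hjk, hkn, -⟩ := id h
  set g : Equiv.Perm (Fin (n + 1)) :=
    ((Equiv.addRight b).trans (zeroExtend σ : Equiv.Perm (Fin (n + 1)))).trans
      (Equiv.subRight (zeroExtend σ b)) with hgdef
  have hgapp : ∀ x : Fin (n + 1), g x = zeroExtend σ (x + b) - zeroExtend σ b := fun x => rfl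
  have hg0 : g 0 = 0 := by
    rw [hgapp, zero_add, sub_self]
  set τ : Equiv.Perm (Fin n) := (Equiv.Perm.decomposeFin g).2 with hτdef
  have h1 : Equiv.Perm.decomposeFin.symm (Equiv.Perm.decomposeFin g) = g :=
    Equiv.symm_apply_apply _ _
  have h0 : (Equiv.Perm.decomposeFin g).1 = 0 := by
    have h2 := Equiv.Perm.decomposeFin_symm_apply_zero
      (Equiv.Perm.decomposeFin g).1 (Equiv.Perm.decomposeFin g).2
    rw [Prod.mk.eta, h1] at h2
    rw [← h2, hg0]
  have hzt : zeroExtend τ = g := by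
    rw [zeroExtend, hτdef, ← h0, Prod.mk.eta, h1]
  have hx : ∀ x : Fin (n + 1), zeroExtend τ x = zeroExtend σ (x + b) - zeroExtend σ b := by
    intro x; rw [hzt, hgapp]
  have hval : ∀ t : Fin n, ((τ t : ℕ) + 1) =
      (n + 1 - (if (b : ℕ) ≤ i ∨ k < (b : ℕ) then (b : ℕ)
          else if (b : ℕ) ≤ k - j + i then (b : ℕ) + (j - i) else (b : ℕ) - (k - j))
        + (if ((t : ℕ) + 1 + (b : ℕ)) % (n + 1) ≤ i ∨ k < ((t : ℕ) + 1 + (b : ℕ)) % (n + 1)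
            then ((t : ℕ) + 1 + (b : ℕ)) % (n + 1)
            else if ((t : ℕ) + 1 + (b : ℕ)) % (n + 1) ≤ k - j + i
              then ((t : ℕ) + 1 + (b : ℕ)) % (n + 1) + (j - i)
              else ((t : ℕ) + 1 + (b : ℕ)) % (n + 1) - (k - j))) % (n + 1) := by
    intro t
    have h1' : ((τ t : ℕ) + 1) = (zeroExtend τ t.succ : Fin (n + 1)).val := by
      rw [zE_succ, Fin.val_succ]
    rw [h1', hx, Fin.sub_def]
    simp only [valF h, Fin.add_def, Fin.val_succ]
  have hBn : (b : ℕ) ≤ n := Nat.lt_succ_iff.mp b.isLt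
  have hun : ∀ t : Fin n, (t : ℕ) + 1 ≤ n := fun t => t.isLt
  by_cases hb1 : (b : ℕ) ≤ i
  · exact ⟨τ, ⟨i - b, j - b, k - b, by omega, by omega, by omega, fun t =>
      (hval t).trans (core n i j k b ((t : ℕ) + 1) _ _ _ hij hjk hkn hBn (by omega) (hun t)
        (Or.inl ⟨hb1, rfl, rfl, rfl⟩))⟩, hx⟩
  · by_cases hb2 : (b : ℕ) ≤ k - j + i
    · exact ⟨τ, ⟨k - j + i - b, n + 1 + 2 * i - (j + b), n + 1 + i - b, by omega, by omega,
        by omega, fun t =>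
        (hval t).trans (core n i j k b ((t : ℕ) + 1) _ _ _ hij hjk hkn hBn (by omega) (hun t)
          (Or.inr (Or.inl ⟨by omega, hb2, rfl, rfl, rfl⟩)))⟩, hx⟩
    · by_cases hb3 : (b : ℕ) ≤ k
      · exact ⟨τ, ⟨k - b, 2 * k - (j + b), n + 1 + i + k - (j + b), by omega, by omega,
          by omega, fun t =>
          (hval t).trans (core n i j k b ((t : ℕ) + 1) _ _ _ hij hjk hkn hBn (by omega) (hun t)
            (Or.inr (Or.inr (Or.inl ⟨by omega, hb3, rfl, rfl, rfl⟩))))⟩, hx⟩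
      · exact ⟨τ, ⟨n + 1 + i - b, n + 1 + j - b, n + 1 + k - b, by omega, by omega,
          by omega, fun t =>
          (hval t).trans (core n i j k b ((t : ℕ) + 1) _ _ _ hij hjk hkn hBn (by omega) (hun t)
            (Or.inr (Or.inr (Or.inr ⟨by omega, rfl, rfl, rfl⟩))))⟩, hx⟩

open Fin.NatCast

lemma seqVal_eq (n : ℕ) (π : Equiv.Perm (Fin n)) (x : ℕ) :
    seqVal n π x = (zeroExtend π ((x : ℕ) : Fin (n + 1)) : Fin (n + 1)).val := by
  unfold seqVal
  have h2 : x % (n + 1) < n + 1 := Nat.mod_lt _ (Nat.succ_pos n)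
  split_ifs with h
  · have hc : ((x : ℕ) : Fin (n + 1)) = 0 := by
      apply Fin.ext; simp [Fin.val_natCast, h]
    rw [hc, zE_zero]
    rfl
  · have hc : ((x : ℕ) : Fin (n + 1)) = (⟨x % (n + 1) - 1, by omega⟩ : Fin n).succ := by
      apply Fin.ext; simp [Fin.val_natCast, Fin.val_succ]; omega
    rw [hc, zE_succ, Fin.val_succ]

lemma toric_rel {n : ℕ} {π π' : Equiv.Perm (Fin n)} (h : ToricEquiv n π π') :
    ∃ r : Fin (n + 1), ∀ x : Fin (n + 1),
      zeroExtend π' x = zeroExtend π (x + r) - zeroExtend π r := by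
  obtain ⟨r, hrn, hc⟩ := h
  refine ⟨((r : ℕ) : Fin (n + 1)), fun x => ?_⟩
  induction x using Fin.cases with
  | zero => rw [zE_zero, zero_add, sub_self]
  | succ t =>
      have hx2 : t.val + 1 ≤ n := t.isLt
      have hcc := hc (t.val + 1) (by omega) hx2
      apply Fin.ext
      rw [Fin.sub_def]
      have e1 : seqVal n π' (t.val + 1) = (zeroExtend π' t.succ : Fin (n + 1)).val := by
        rw [seqVal_eq]
        congr 2
        apply Fin.ext
        rw [Fin.val_natCast, Fin.val_succ]
        exact Nat.mod_eq_of_lt (by omega)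
      have e2 : seqVal n π (t.val + 1 + r) =
          (zeroExtend π (t.succ + ((r : ℕ) : Fin (n + 1))) : Fin (n + 1)).val := by
        rw [seqVal_eq]
        congr 2
        apply Fin.ext
        show ((t : ℕ) + 1 + r) % (n + 1) = ((t : ℕ) + 1 + r % (n + 1)) % (n + 1)
        exact (Nat.add_mod_mod _ _ _).symm
      have e3 : seqVal n π r = (zeroExtend π ((r : ℕ) : Fin (n + 1)) : Fin (n + 1)).val :=
        seqVal_eq n π r
      rw [e1, e2, e3] at hcc
      have hA : (zeroExtend π' t.succ : Fin (n + 1)).val < n + 1 := Fin.is_lt _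
      have hD : (zeroExtend π ((r : ℕ) : Fin (n + 1)) : Fin (n + 1)).val < n + 1 := Fin.is_lt _
      unfold Nat.ModEq at hcc
      rw [Nat.mod_eq_of_lt hA] at hcc
      rw [hcc]
      congr 1
      omega

lemma rel_symm {n : ℕ} {π π' : Equiv.Perm (Fin n)}
    (h : ∃ r : Fin (n + 1), ∀ x : Fin (n + 1),
      zeroExtend π' x = zeroExtend π (x + r) - zeroExtend π r) :
    ∃ r' : Fin (n + 1), ∀ x : Fin (n + 1),
      zeroExtend π x = zeroExtend π' (x + r') - zeroExtend π' r' := by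
  obtain ⟨r, h⟩ := h
  refine ⟨-r, fun x => ?_⟩
  have h1 := h (x - r)
  have h2 := h (-r)
  rw [sub_add_cancel] at h1
  rw [neg_add_cancel, zE_zero] at h2
  rw [show x + -r = x - r from (sub_eq_add_neg x r).symm, h1, h2]
  abel

lemma key_list {n : ℕ} : ∀ (l : List (Equiv.Perm (Fin n))),
    (∀ σ ∈ l, IsBlockTransposition n σ) → ∀ b : Fin (n + 1),
    ∃ l' : List (Equiv.Perm (Fin n)), l'.length = l.length ∧
      (∀ σ ∈ l', IsBlockTransposition n σ) ∧
      ∀ x : Fin (n + 1), zeroExtend l'.prod x = zeroExtend l.prod (x + b) - zeroExtend l.prod b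
  | [], _, b => ⟨[], rfl, by simp, by
      intro x
      simp only [List.prod_nil, zE_one, Equiv.Perm.one_apply]
      rw [add_sub_cancel_right]⟩
  | σ :: l, hl, b => by
      obtain ⟨l₁, hlen, hbt, hfun⟩ :=
        key_list l (fun ρ hρ => hl ρ (List.mem_cons_of_mem _ hρ)) b
      obtain ⟨τ, hτ, hτfun⟩ := key σ (hl σ List.mem_cons_self) (zeroExtend l.prod b)
      refine ⟨τ :: l₁, by simp [hlen], ?_, ?_⟩
      · intro ρ hρ
        rcases List.mem_cons.mp hρ with h | h
        · exact h ▸ hτ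
        · exact hbt ρ h
      · intro x
        rw [List.prod_cons, List.prod_cons, zE_mul, zE_mul]
        simp only [Equiv.Perm.mul_apply]
        rw [hfun x, hτfun (zeroExtend l.prod (x + b) - zeroExtend l.prod b), sub_add_cancel]

lemma rel_factor {n : ℕ} {ρ ρ' : Equiv.Perm (Fin n)}
    (hrel : ∃ r : Fin (n + 1), ∀ x : Fin (n + 1),
      zeroExtend ρ' x = zeroExtend ρ (x + r) - zeroExtend ρ r)
    (m : ℕ)
    (hm : ∃ l : List (Equiv.Perm (Fin n)), l.length = m ∧
      (∀ σ ∈ l, IsBlockTransposition n σ) ∧ ρ = 1 * l.prod) :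
    ∃ l : List (Equiv.Perm (Fin n)), l.length = m ∧
      (∀ σ ∈ l, IsBlockTransposition n σ) ∧ ρ' = 1 * l.prod := by
  obtain ⟨r, hr⟩ := hrel
  obtain ⟨l, hlen, hbt, hprod⟩ := hm
  rw [one_mul] at hprod
  obtain ⟨l', hlen', hbt', hfun⟩ := key_list l hbt r
  refine ⟨l', hlen'.trans hlen, hbt', ?_⟩
  rw [one_mul]
  apply zE_inj
  apply Equiv.ext
  intro x
  rw [hr x, hprod, hfun x]

/-- Invariance principle, part I: torically equivalent permutations
have the same block transposition distance. -/
theorem toricEquiv_btDist (n : ℕ) (π π' : Equiv.Perm (Fin n))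
    (h : ToricEquiv n π π') : btDist n 1 π = btDist n 1 π' := by
  have hrel := toric_rel h
  have hrel' := rel_symm hrel
  unfold btDist
  congr 1
  ext m
  exact ⟨rel_factor hrel m, rel_factor hrel' m⟩
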